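/- Let Y : [0,∞) → ℝ be continuous with Y(0) = 0, and suppose Y = Z + L where Z : [0,∞) → [0,∞) is nonnegative, L : [0,∞) → ℝ is continuous, nonincreasing, L(0) = 0, and the Stieltjes measure dL (i.e., d(−L) viewed as a nonnegative measure) is supported on the set {t : Z(t) = 0}. Then L(t) = inf_{0 ≤ s ≤ t} Y(s) for all t ≥ 0 (equivalently, L(t) = min(0, inf_{0≤s≤t} Y(s)), and Z(t) = Y(t) − inf_{0≤s≤t} Y(s)). -/

import Mathlib

open Set

/-- Uniqueness in Skorohod's reflection lemma: if `Y = Z + L` with `Z ≥ 0`,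
`L` continuous nonincreasing starting at `0` and decreasing only on `{Z = 0}`,
then `L` is the running infimum of `Y`. -/
theorem stmt2 (Y Z L : ℝ → ℝ)
    (hYcont : Continuous Y) (hY0 : Y 0 = 0)
    (hdecomp : ∀ t, 0 ≤ t → Y t = Z t + L t)
    (hZnonneg : ∀ t, 0 ≤ t → 0 ≤ Z t)
    (hLcont : Continuous L) (hLmono : AntitoneOn L (Set.Ici 0)) (hL0 : L 0 = 0)
    (hsupp : ∀ a b : ℝ, 0 ≤ a → a ≤ b →
      (∀ t ∈ Set.Ioo a b, Z t ≠ 0) → L a = L b) :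
    ∀ t, 0 ≤ t → L t = sInf (Y '' Set.Icc 0 t) := by
  intro t ht
  have hlb : ∀ x ∈ Y '' Set.Icc 0 t, L t ≤ x := by
    rintro x ⟨s, hs, rfl⟩
    have hd := hdecomp s hs.1
    have hZ := hZnonneg s hs.1
    have hL : L t ≤ L s := hLmono hs.1 ht hs.2
    linarith
  have hbdd : BddBelow (Y '' Set.Icc 0 t) := ⟨L t, hlb⟩
  have hne : (Y '' Set.Icc 0 t).Nonempty := ⟨Y 0, ⟨0, ⟨le_refl 0, ht⟩, rfl⟩⟩
  refine le_antisymm (le_csInf hne hlb) ?_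
  by_cases h0 : L t = 0
  · have hmem : Y 0 ∈ Y '' Set.Icc 0 t := ⟨0, ⟨le_rfl, ht⟩, rfl⟩
    calc sInf (Y '' Set.Icc 0 t) ≤ Y 0 := csInf_le hbdd hmem
      _ = L t := by rw [hY0, h0]
  · have hLt0 : L t < 0 := by
      have : L t ≤ L 0 := hLmono (Set.mem_Ici.2 le_rfl) ht ht
      rw [hL0] at this
      exact lt_of_le_of_ne this h0
    set S := {s : ℝ | s ∈ Set.Icc 0 t ∧ L s ≤ L t} with hS
    have hSclosed : IsClosed S := by
      have : S = Set.Icc 0 t ∩ L ⁻¹' Set.Iic (L t) := rfl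
      rw [this]
      exact isClosed_Icc.inter (isClosed_Iic.preimage hLcont)
    have hSne : S.Nonempty := ⟨t, ⟨ht, le_rfl⟩, le_rfl⟩
    have hSbdd : BddBelow S := ⟨0, fun s hs => hs.1.1⟩
    set s₀ := sInf S with hs₀def
    have hs₀S : s₀ ∈ S := hSclosed.csInf_mem hSne hSbdd
    have hs₀0 : 0 ≤ s₀ := hs₀S.1.1
    have hs₀t : s₀ ≤ t := hs₀S.1.2
    have hLs₀ : L s₀ = L t := le_antisymm hs₀S.2 (hLmono hs₀0 ht hs₀t)
    have hs₀pos : 0 < s₀ := by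
      rcases lt_or_eq_of_le hs₀0 with h | h
      · exact h
      · exfalso; rw [← h, hL0] at hLs₀; linarith
    have hZs₀ : Z s₀ = 0 := by
      by_contra hZ
      have hZpos : 0 < Z s₀ := lt_of_le_of_ne (hZnonneg s₀ hs₀0) (Ne.symm hZ)
      have hW : (0 : ℝ) < Y s₀ - L s₀ := by
        have := hdecomp s₀ hs₀0; linarith
      have hopen : IsOpen {s : ℝ | 0 < Y s - L s} :=
        isOpen_lt continuous_const (hYcont.sub hLcont)
      obtain ⟨ε, hεpos, hball⟩ := Metric.isOpen_iff.1 hopen s₀ hW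
      set a := max (s₀ - ε/2) (s₀/2) with ha
      have ha0 : 0 < a := lt_max_of_lt_right (by linarith)
      have has₀ : a < s₀ := max_lt (by linarith) (by linarith)
      have hZa : ∀ u ∈ Set.Ioo a s₀, Z u ≠ 0 := by
        intro u hu
        have hu0 : 0 ≤ u := le_of_lt (lt_of_le_of_lt (le_of_lt ha0) hu.1)
        have hdist : dist u s₀ < ε := by
          rw [Real.dist_eq, abs_of_nonpos (by linarith [hu.2])]
          have : s₀ - ε/2 ≤ a := le_max_left _ _
          linarith [hu.1]
        have := hball hdist
        have hWu : 0 < Y u - L u := this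
        have := hdecomp u hu0
        intro hc; rw [hc] at this; linarith
      have hLa : L a = L s₀ := hsupp a s₀ (le_of_lt ha0) (le_of_lt has₀) hZa
      have haS : a ∈ S := ⟨⟨le_of_lt ha0, le_trans (le_of_lt has₀) hs₀t⟩,
        by rw [hLa, hLs₀]⟩
      have := csInf_le hSbdd haS
      rw [← hs₀def] at this
      linarith
    have hYs₀ : Y s₀ = L t := by
      have := hdecomp s₀ hs₀0; rw [hZs₀, hLs₀] at this; linarith
    have : Y s₀ ∈ Y '' Set.Icc 0 t := ⟨s₀, ⟨hs₀0, hs₀t⟩, rfl⟩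
    calc sInf (Y '' Set.Icc 0 t) ≤ Y s₀ := csInf_le hbdd this
      _ = L t := hYs₀
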